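/- Formula for the matrix rate of convergence: with w* ∈ Ω such that M(w*) is positive definite, the Jacobian R(α) = ∂T_α(w)/∂w evaluated at w = w* has entries R_ij(α) = −w*_i d_ij² / (m − α) for i ≠ j, and R_ii(α) = (d_ii − w*_i d_ii² − α)/(m − α) for the diagonal entries, where d_ij = x_iᵀ M(w*)^{-1} x_j. -/

import Mathlib

open Matrix Filter

/-- The information matrix `M(w) = ∑ i, w_i x_i x_iᵀ`. -/
noncomputable def Mmat {n m : ℕ} (x : Fin n → Fin m → ℝ) (w : Fin n → ℝ) :
    Matrix (Fin m) (Fin m) ℝ :=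
  ∑ i, w i • Matrix.vecMulVec (x i) (x i)

/-- The multiplicative update map `T_α(w)_i = w_i (x_iᵀ M(w)⁻¹ x_i − α)/(m − α)`. -/
noncomputable def Talg {n m : ℕ} (x : Fin n → Fin m → ℝ) (α : ℝ) (w : Fin n → ℝ) :
    Fin n → ℝ :=
  fun i => w i * ((x i ⬝ᵥ (Mmat x w)⁻¹ *ᵥ x i) - α) / ((m : ℝ) - α)

attribute [local instance] Matrix.linftyOpNormedRing Matrix.linftyOpNormedAlgebra

/-- `Mmat x` as a linear map in `w`. -/
noncomputable def MmatL {n m : ℕ} (x : Fin n → Fin m → ℝ) :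
    (Fin n → ℝ) →ₗ[ℝ] Matrix (Fin m) (Fin m) ℝ where
  toFun w := Mmat x w
  map_add' a b := by simp [Mmat, add_smul, Finset.sum_add_distrib]
  map_smul' c a := by simp [Mmat, smul_smul, Finset.smul_sum]

/-- `N ↦ xᵢᵀ N xᵢ` as a linear map. -/
noncomputable def quadL {n m : ℕ} (x : Fin n → Fin m → ℝ) (i : Fin n) :
    Matrix (Fin m) (Fin m) ℝ →ₗ[ℝ] ℝ where
  toFun N := x i ⬝ᵥ N *ᵥ x i
  map_add' A B := by simp [Matrix.add_mulVec, dotProduct_add]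
  map_smul' c A := by simp [Matrix.smul_mulVec, dotProduct_smul]

lemma vecMulVec_mulVec' {m : ℕ} (a b u : Fin m → ℝ) :
    Matrix.vecMulVec a b *ᵥ u = (b ⬝ᵥ u) • a := by
  funext k
  simp only [Matrix.mulVec, Matrix.vecMulVec, dotProduct, Pi.smul_apply, smul_eq_mul,
    Matrix.of_apply]
  rw [Finset.sum_mul]
  exact Finset.sum_congr rfl fun j _ => by ring

set_option maxHeartbeats 2000000

/-- Formula for the matrix rate of convergence: the Jacobian `R(α)` of `T_α` at an interior
point `w*` with `M(w*)` positive definite has entries `R_ij = −w*_i d_ij²/(m−α)` for `i ≠ j`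
and `R_ii = (d_ii − w*_i d_ii² − α)/(m−α)`, where `d_ij = x_iᵀ M(w*)⁻¹ x_j`. -/
theorem stmt_3 {n m : ℕ} (hm : 2 ≤ m) (hnm : m ≤ n)
    (x : Fin n → Fin m → ℝ) (hrank : (Matrix.of x).rank = m)
    (α : ℝ) (hα0 : 0 ≤ α) (hαm : α < m)
    (wstar : Fin n → ℝ) (hpos : ∀ i, 0 < wstar i) (hsum : ∑ i, wstar i = 1)
    (hM : (Mmat x wstar).PosDef)
    (d : Fin n → Fin n → ℝ)
    (hd : ∀ i j, d i j = x i ⬝ᵥ (Mmat x wstar)⁻¹ *ᵥ x j)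
    (R : Matrix (Fin n) (Fin n) ℝ)
    (hR : R = Matrix.of fun i j =>
      if i = j then (d i i - wstar i * (d i i) ^ 2 - α) / ((m : ℝ) - α)
      else -(wstar i * (d i j) ^ 2) / ((m : ℝ) - α)) :
    HasFDerivAt (Talg x α)
      (LinearMap.toContinuousLinearMap (Matrix.toLin' R)) wstar := by
  have hc0 : (0:ℝ) < (m:ℝ) - α := sub_pos.2 hαm
  have hc : ((m:ℝ) - α) ≠ 0 := ne_of_gt hc0
  set M : Matrix (Fin m) (Fin m) ℝ := Mmat x wstar with hMdef
  have hU : IsUnit M := (Matrix.isUnit_iff_isUnit_det M).2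
    (isUnit_iff_ne_zero.2 hM.det_pos.ne')
  -- symmetry of M⁻¹
  have hHerm : M⁻¹.IsHermitian := hM.1.inv
  have hsymm : ∀ a b : Fin m → ℝ, a ⬝ᵥ M⁻¹ *ᵥ b = b ⬝ᵥ M⁻¹ *ᵥ a := by
    intro a b
    have hT : M⁻¹ᵀ = M⁻¹ := by
      have := hHerm; rwa [Matrix.IsHermitian, Matrix.conjTranspose_eq_transpose_of_trivial] at this
    calc a ⬝ᵥ M⁻¹ *ᵥ b = M⁻¹ᵀ *ᵥ a ⬝ᵥ b := by
          rw [Matrix.dotProduct_mulVec, ← Matrix.mulVec_transpose]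
      _ = b ⬝ᵥ M⁻¹ *ᵥ a := by rw [hT, dotProduct_comm]
  -- the derivative of w ↦ Mmat x w
  have hAder : HasFDerivAt (fun w => Mmat x w)
      (LinearMap.toContinuousLinearMap (MmatL x)) wstar :=
    (LinearMap.toContinuousLinearMap (MmatL x)).hasFDerivAt
  -- the derivative of matrix inversion
  have h0 : HasFDerivAt Ring.inverse
      (-(ContinuousLinearMap.mulLeftRight ℝ _ M⁻¹ M⁻¹)) M := by
    have := hasFDerivAt_ringInverse (𝕜 := ℝ) hU.unit
    rwa [Matrix.coe_units_inv, hU.unit_spec] at this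
  have hIder : HasFDerivAt (fun w => (Mmat x w)⁻¹)
      ((-(ContinuousLinearMap.mulLeftRight ℝ _ M⁻¹ M⁻¹)).comp
        (LinearMap.toContinuousLinearMap (MmatL x))) wstar := by
    have h1 := h0.comp wstar hAder
    have heq : (fun w => (Mmat x w)⁻¹) = Ring.inverse ∘ (fun w => Mmat x w) := by
      funext w; simp [Function.comp, Matrix.nonsing_inv_eq_ringInverse]
    rw [heq]; exact h1
  -- coordinatewise
  apply hasFDerivAt_pi''
  intro i
  -- derivative of the quadratic form
  have hq : HasFDerivAt (fun w => x i ⬝ᵥ (Mmat x w)⁻¹ *ᵥ x i)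
      ((LinearMap.toContinuousLinearMap (quadL x i)).comp
        ((-(ContinuousLinearMap.mulLeftRight ℝ _ M⁻¹ M⁻¹)).comp
          (LinearMap.toContinuousLinearMap (MmatL x)))) wstar :=
    (LinearMap.toContinuousLinearMap (quadL x i)).hasFDerivAt.comp wstar hIder
  have hproj : HasFDerivAt (fun w : Fin n → ℝ => w i)
      (show (Fin n → ℝ) →L[ℝ] ℝ from ContinuousLinearMap.proj i) wstar :=
    (show (Fin n → ℝ) →L[ℝ] ℝ from ContinuousLinearMap.proj i).hasFDerivAt
  have hprod := hproj.mul (hq.sub_const α)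
  have hfin := hprod.const_mul (((m:ℝ) - α)⁻¹)
  have heq : (fun w => Talg x α w i)
      = fun w => ((m:ℝ) - α)⁻¹ * (w i * ((x i ⬝ᵥ (Mmat x w)⁻¹ *ᵥ x i) - α)) := by
    funext w; simp [Talg]; ring
  rw [heq]
  refine hfin.congr_fderiv ?_
  symm
  -- now prove the continuous linear maps are equal
  refine ContinuousLinearMap.ext fun v => ?_
  have hterm : ∀ j, x i ⬝ᵥ (M⁻¹ * Matrix.vecMulVec (x j) (x j) * M⁻¹) *ᵥ x i = d i j ^ 2 := by
    intro j
    rw [Matrix.mul_assoc, ← Matrix.mulVec_mulVec, ← Matrix.mulVec_mulVec,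
      vecMulVec_mulVec', Matrix.mulVec_smul, dotProduct_smul, smul_eq_mul,
      hsymm (x j) (x i), ← hd i j, sq]
  have key : x i ⬝ᵥ (M⁻¹ * Mmat x v * M⁻¹) *ᵥ x i = ∑ j, v j * (d i j)^2 := by
    have h1 : M⁻¹ * Mmat x v * M⁻¹
        = ∑ j, v j • (M⁻¹ * Matrix.vecMulVec (x j) (x j) * M⁻¹) := by
      simp [Mmat, Finset.mul_sum, Finset.sum_mul, Matrix.mul_smul, Matrix.smul_mul]
    have h0' : x i ⬝ᵥ (M⁻¹ * Mmat x v * M⁻¹) *ᵥ x i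
        = (quadL x i) (M⁻¹ * Mmat x v * M⁻¹) := rfl
    rw [h0', h1, map_sum]
    refine Finset.sum_congr rfl fun j _ => ?_
    rw [LinearMap.map_smul, smul_eq_mul]
    congr 1
    exact hterm j
  -- evaluate both sides
  simp only [ContinuousLinearMap.comp_apply, ContinuousLinearMap.smul_apply,
    ContinuousLinearMap.add_apply, ContinuousLinearMap.neg_apply,
    ContinuousLinearMap.mulLeftRight_apply, ContinuousLinearMap.proj_apply,
    LinearMap.coe_toContinuousLinearMap', Matrix.toLin'_apply]
  have hMv : (MmatL x) v = Mmat x v := rfl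
  have hquad : (quadL x i) (-(M⁻¹ * (MmatL x) v * M⁻¹)) = -(∑ j, v j * (d i j)^2) := by
    show x i ⬝ᵥ (-(M⁻¹ * (MmatL x) v * M⁻¹)) *ᵥ x i = _
    rw [hMv, Matrix.neg_mulVec, dotProduct_neg, key]
  change (R *ᵥ v) i = ((m:ℝ) - α)⁻¹ * (wstar i * (quadL x i) (-(M⁻¹ * (MmatL x) v * M⁻¹))
    + (x i ⬝ᵥ (Mmat x wstar)⁻¹ *ᵥ x i - α) * v i)
  rw [hquad, hR]
  have hlhs : (Matrix.of (fun i j =>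
      if i = j then (d i i - wstar i * (d i i) ^ 2 - α) / ((m : ℝ) - α)
      else -(wstar i * (d i j) ^ 2) / ((m : ℝ) - α)) *ᵥ v) i
      = ∑ j, (if i = j then (d i i - wstar i * (d i i) ^ 2 - α) / ((m : ℝ) - α)
      else -(wstar i * (d i j) ^ 2) / ((m : ℝ) - α)) * v j := by
    simp [Matrix.mulVec, dotProduct]
  rw [hlhs]
  have hsplit : ∀ j, (if i = j then (d i i - wstar i * (d i i) ^ 2 - α) / ((m : ℝ) - α)
      else -(wstar i * (d i j) ^ 2) / ((m : ℝ) - α)) * v j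
      = (if j = i then (d i i - α) / ((m : ℝ) - α) * v i else 0)
        + -(wstar i * (d i j) ^ 2) / ((m : ℝ) - α) * v j := by
    intro j
    by_cases h : i = j
    · subst h; simp only [eq_self_iff_true, if_true]; field_simp; ring
    · simp [h, Ne.symm h]
  rw [Finset.sum_congr rfl fun j _ => hsplit j, Finset.sum_add_distrib,
    Finset.sum_ite_eq' Finset.univ i]
  have h3 : ∑ j, -(wstar i * (d i j) ^ 2) / ((m : ℝ) - α) * v j
      = (-(wstar i) / ((m : ℝ) - α)) * ∑ j, v j * (d i j) ^ 2 := by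
    rw [Finset.mul_sum]
    exact Finset.sum_congr rfl fun j _ => by ring
  rw [h3]
  have hdii : x i ⬝ᵥ (Mmat x wstar)⁻¹ *ᵥ x i = d i i := (hd i i).symm
  rw [hdii]
  simp only [Finset.mem_univ, if_pos, smul_eq_mul]
  field_simp
  ring
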